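/- Let W be a complex vector space and let A, B, C, D : ℂ → End(W) be a QISM I family on W. Let u₀ ∈ ℂ, let j₋, j₊ ∈ ℤ ∪ {−∞, +∞}, and set 𝒟 = {u₀ + m : m ∈ ℤ, j₋ < m < j₊}. Assume: (i) for every u ∈ 𝒟 the kernel {w ∈ W : C(u)w = 0} is one-dimensional; (ii) for every u ∈ 𝒟 and every nonzero w ∈ W with C(u)w = 0 one has A(u)w ≠ 0 if u ≠ u₀ + j₋ + 1 and A(u)w = 0 if u = u₀ + j₋ + 1, and D(u)w ≠ 0 if u ≠ u₀ + j₊ − 1 and D(u)w = 0 if u = u₀ + j₊ − 1. For each u ∈ 𝒟 choose a nonzero F(u) ∈ W with C(u)F(u) = 0. Then there exist scalar functions Δ₋, Δ₊ : ℂ → ℂ such that A(u)F(u) = Δ₋(u − 1/2) F(u−1) for all u ∈ 𝒟 with u ≠ u₀ + j₋ + 1, and D(u)F(u) = Δ₊(u + 1/2) F(u+1) for all u ∈ 𝒟 with u ≠ u₀ + j₊ − 1. Moreover, for every u ∈ (𝒟 + 1/2) ∪ (𝒟 − 1/2) the quantum determinant Δ(u) = A(u−1/2)D(u+1/2) − C(u−1/2)B(u+1/2)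 acts on the span of {F(v) : v ∈ 𝒟} as multiplication by a scalar c(u), where c(u) = Δ₊(u)Δ₋(u) if u ∉ {u₀ + j₊ − 1/2, u₀ + j₋ + 1/2}, and c(u) = 0 if u ∈ {u₀ + j₊ − 1/2, u₀ + j₋ + 1/2}. -/

import Mathlib

/-- Coercion of an integer into the extended reals. -/
noncomputable def intToE (m : ℤ) : EReal := ((m : ℝ) : EReal)

/-- A QISM I family on a complex vector space W: operators A, B, C, D : ℂ → End(W)
satisfying the sixteen commutation relations obtained from
R(u−v)T⁽¹⁾(u)T⁽²⁾(v) = T⁽²⁾(v)T⁽¹⁾(u)R(u−v) with rational R-matrix R(u) = u + P. -/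
def IsQISMI {W : Type*} [AddCommGroup W] [Module ℂ W]
    (A B C D : ℂ → Module.End ℂ W) : Prop :=
  ∀ u v : ℂ,
    A u * A v = A v * A u ∧
    B u * B v = B v * B u ∧
    C u * C v = C v * C u ∧
    D u * D v = D v * D u ∧
    (u - v) • (A u * B v - B v * A u) = -(A u * B v - A v * B u) ∧
    (u - v) • (B u * A v - A v * B u) = -(B u * A v - B v * A u) ∧
    (u - v) • (A u * C v - C v * A u) = -(C u * A v - C v * A u) ∧
    (u - v) • (C u * A v - A v * C u) = -(A u * C v - A v * C u) ∧
    (u - v) • (B u * D v - D v * B u) = -(D u * B v - D v * B u) ∧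
    (u - v) • (D u * B v - B v * D u) = -(B u * D v - B v * D u) ∧
    (u - v) • (D u * C v - C v * D u) = -(D u * C v - D v * C u) ∧
    (u - v) • (C u * D v - D v * C u) = -(C u * D v - C v * D u) ∧
    (u - v) • (A u * D v - D v * A u) = -(C u * B v - C v * B u) ∧
    (u - v) • (D u * A v - A v * D u) = -(B u * C v - B v * C u) ∧
    (u - v) • (B u * C v - C v * B u) = -(D u * A v - D v * A u) ∧
    (u - v) • (C u * B v - B v * C u) = -(A u * D v - A v * D u)

/-- The quantum determinant Δ(u) = A(u−1/2)D(u+1/2) − C(u−1/2)B(u+1/2) of a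
QISM I family. -/
noncomputable def qDetI {W : Type*} [AddCommGroup W] [Module ℂ W]
    (A B C D : ℂ → Module.End ℂ W) (u : ℂ) : Module.End ℂ W :=
  A (u - 1/2) * D (u + 1/2) - C (u - 1/2) * B (u + 1/2)


lemma keyC {W : Type*} [AddCommGroup W] [Module ℂ W]
    {A B C D : ℂ → Module.End ℂ W} (hQISM : IsQISMI A B C D)
    (a w : ℂ) (hp : a ≠ w) (y : W) :
    C w (A a (D (a+1) y)) - C w (C a (B (a+1) y))
      = A a (D (a+1) (C w y)) - C a (B (a+1) (C w y)) := by
  have h0 := LinearMap.congr_fun (hQISM a (a+1)).2.2.1 (B w y)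
  have h1 := LinearMap.congr_fun (hQISM a w).2.2.1 (B (a+1) y)
  have h2 := LinearMap.congr_fun (hQISM (a+1) w).2.2.1 (B a y)
  have h3 := congrArg (⇑(D (a+1))) (LinearMap.congr_fun (hQISM a w).2.2.2.2.2.2.1 y)
  have h4 := congrArg (⇑(D w)) (LinearMap.congr_fun (hQISM (a+1) a).2.2.2.2.2.2.1 y)
  have h5 := LinearMap.congr_fun (hQISM (a+1) a).2.2.2.2.2.2.1 (D w y)
  have h6 := LinearMap.congr_fun (hQISM (a+1) w).2.2.2.2.2.2.1 (D a y)
  have h7 := LinearMap.congr_fun (hQISM a (a+1)).2.2.2.2.2.2.2.2.2.2.1 (A w y)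
  have h8 := congrArg (⇑(A (a+1))) (LinearMap.congr_fun (hQISM a w).2.2.2.2.2.2.2.2.2.2.1 y)
  have h9 := LinearMap.congr_fun (hQISM a w).2.2.2.2.2.2.2.2.2.2.1 (A (a+1) y)
  have h10 := congrArg (⇑(A (a+1))) (LinearMap.congr_fun (hQISM w a).2.2.2.2.2.2.2.2.2.2.1 y)
  have h11 := LinearMap.congr_fun (hQISM w a).2.2.2.2.2.2.2.2.2.2.1 (A (a+1) y)
  have h12 := LinearMap.congr_fun (hQISM w (a+1)).2.2.2.2.2.2.2.2.2.2.1 (A a y)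
  have h13 := congrArg (⇑(C w)) (LinearMap.congr_fun (hQISM a (a+1)).2.2.2.2.2.2.2.2.2.2.2.2.1 y)
  have h14 := LinearMap.congr_fun (hQISM a (a+1)).2.2.2.2.2.2.2.2.2.2.2.2.1 (C w y)
  have h15 := congrArg (⇑(C (a+1))) (LinearMap.congr_fun (hQISM a w).2.2.2.2.2.2.2.2.2.2.2.2.1 y)
  have h16 := congrArg (⇑(C w)) (LinearMap.congr_fun (hQISM (a+1) a).2.2.2.2.2.2.2.2.2.2.2.2.1 y)
  have h17 := congrArg (⇑(C a)) (LinearMap.congr_fun (hQISM (a+1) w).2.2.2.2.2.2.2.2.2.2.2.2.1 y)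
  have h18 := LinearMap.congr_fun (hQISM (a+1) w).2.2.2.2.2.2.2.2.2.2.2.2.1 (C a y)
  have h19 := congrArg (⇑(C (a+1))) (LinearMap.congr_fun (hQISM w a).2.2.2.2.2.2.2.2.2.2.2.2.1 y)
  have h20 := congrArg (⇑(C w)) (LinearMap.congr_fun (hQISM a (a+1)).2.2.2.2.2.2.2.2.2.2.2.2.2.1 y)
  have h21 := congrArg (⇑(C (a+1))) (LinearMap.congr_fun (hQISM a w).2.2.2.2.2.2.2.2.2.2.2.2.2.1 y)
  have h22 := congrArg (⇑(C w)) (LinearMap.congr_fun (hQISM a (a+1)).2.2.2.2.2.2.2.2.2.2.2.2.2.2.1 y)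
  simp only [Module.End.mul_apply, LinearMap.smul_apply, LinearMap.sub_apply, LinearMap.neg_apply, map_smul, map_sub, map_neg] at h0 h1 h2 h3 h4 h5 h6 h7 h8 h9 h10 h11 h12 h13 h14 h15 h16 h17 h18 h19 h20 h21 h22
  have key : ((a-w)^2) • (C w (A a (D (a+1) y)) - C w (C a (B (a+1) y)) - (A a (D (a+1) (C w y)) - C a (B (a+1) (C w y)))) = 0 := by
    linear_combination (norm := module)
      ((2)*(a-w) + (2)*((a-w)^2) : ℂ) • h0 +
      ((-2)*(a-w) + (-2)*((a-w)^2) : ℂ) • h1 +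
      ((2)*(a-w) + (2)*((a-w)^2) : ℂ) • h2 +
      ((-1)*(a-w) : ℂ) • h3 +
      ((1)*((a-w)^2) + (1)*((a-w)^3) : ℂ) • h4 +
      ((-1)*(a-w) + (-2)*((a-w)^2) + (-1)*((a-w)^3) : ℂ) • h5 +
      ((1)*(a-w) : ℂ) • h6 +
      ((-1)*(a-w) : ℂ) • h7 +
      ((1) + (1)*(a-w) : ℂ) • h8 +
      ((-2) + (-2)*(a-w) : ℂ) • h9 +
      ((1) + (2)*(a-w) + (1)*((a-w)^2) : ℂ) • h10 +
      ((-2) + (-4)*(a-w) + (-2)*((a-w)^2) : ℂ) • h11 +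
      ((1)*(a-w) + (1)*((a-w)^2) : ℂ) • h12 +
      ((-1)*((a-w)^2) : ℂ) • h13 +
      ((1)*((a-w)^2) : ℂ) • h14 +
      ((1) + (2)*(a-w) + (1)*((a-w)^2) : ℂ) • h15 +
      ((2)*(a-w) + (2)*((a-w)^2) : ℂ) • h16 +
      ((-2)*(a-w) + (-2)*((a-w)^2) : ℂ) • h17 +
      ((1)*((a-w)^2) : ℂ) • h18 +
      ((1) + (-1)*((a-w)^2) : ℂ) • h19 +
      ((-1)*((a-w)^2) : ℂ) • h20 +
      ((1)*((a-w)^2) : ℂ) • h21 +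
      ((-1)*((a-w)^2) : ℂ) • h22
  rcases smul_eq_zero.mp key with h | h
  · exact absurd ((pow_eq_zero_iff two_ne_zero).mp h) (sub_ne_zero.mpr hp)
  · exact sub_eq_zero.mp h

lemma keyD {W : Type*} [AddCommGroup W] [Module ℂ W]
    {A B C D : ℂ → Module.End ℂ W} (hQISM : IsQISMI A B C D)
    (a w : ℂ) (hp : a ≠ w) (y : W) :
    D w (A a (D (a+1) y)) - D w (C a (B (a+1) y))
      = A a (D (a+1) (D w y)) - C a (B (a+1) (D w y)) := by
  have h0 := LinearMap.congr_fun (hQISM (a+1) w).2.2.2.1 (A a y)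
  have h1 := congrArg (⇑(C (a+1))) (LinearMap.congr_fun (hQISM a w).2.2.2.2.2.2.2.2.1 y)
  have h2 := LinearMap.congr_fun (hQISM a (a+1)).2.2.2.2.2.2.2.2.2.2.1 (B w y)
  have h3 := LinearMap.congr_fun (hQISM w (a+1)).2.2.2.2.2.2.2.2.2.2.1 (B a y)
  have h4 := congrArg (⇑(D w)) (LinearMap.congr_fun (hQISM a (a+1)).2.2.2.2.2.2.2.2.2.2.2.2.1 y)
  have h5 := LinearMap.congr_fun (hQISM a (a+1)).2.2.2.2.2.2.2.2.2.2.2.2.1 (D w y)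
  have h6 := congrArg (⇑(D (a+1))) (LinearMap.congr_fun (hQISM a w).2.2.2.2.2.2.2.2.2.2.2.2.1 y)
  simp only [Module.End.mul_apply, LinearMap.smul_apply, LinearMap.sub_apply, LinearMap.neg_apply, map_smul, map_sub, map_neg] at h0 h1 h2 h3 h4 h5 h6
  have key : ((a-w)^1) • (D w (A a (D (a+1) y)) - D w (C a (B (a+1) y)) - (A a (D (a+1) (D w y)) - C a (B (a+1) (D w y)))) = 0 := by
    linear_combination (norm := module)
      ((-1)*(a-w) : ℂ) • h0 +
      ((1) : ℂ) • h1 +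
      ((-1) : ℂ) • h2 +
      ((1) : ℂ) • h3 +
      ((-1)*(a-w) : ℂ) • h4 +
      ((1)*(a-w) : ℂ) • h5 +
      ((-1) : ℂ) • h6
  rcases smul_eq_zero.mp key with h | h
  · exact absurd ((pow_eq_zero_iff one_ne_zero).mp h) (sub_ne_zero.mpr hp)
  · exact sub_eq_zero.mp h

lemma shiftA {W : Type*} [AddCommGroup W] [Module ℂ W]
    {A B C D : ℂ → Module.End ℂ W} (hQISM : IsQISMI A B C D)
    (v : ℂ) (y : W) (hy : C v y = 0) : C (v-1) (A v y) = 0 := by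
  have e := LinearMap.congr_fun (hQISM (v-1) v).2.2.2.2.2.2.2.1 y
  simp only [Module.End.mul_apply, LinearMap.smul_apply, LinearMap.sub_apply,
    LinearMap.neg_apply, hy, map_zero] at e
  linear_combination (norm := module) (-1 : ℂ) • e

lemma shiftD {W : Type*} [AddCommGroup W] [Module ℂ W]
    {A B C D : ℂ → Module.End ℂ W} (hQISM : IsQISMI A B C D)
    (v : ℂ) (y : W) (hy : C v y = 0) : C (v+1) (D v y) = 0 := by
  have e1 := LinearMap.congr_fun (hQISM (v+1) v).2.2.2.2.2.2.2.2.2.2.1 y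
  have e2 := LinearMap.congr_fun (hQISM (v+1) v).2.2.2.2.2.2.2.2.2.2.2.1 y
  simp only [Module.End.mul_apply, LinearMap.smul_apply, LinearMap.sub_apply,
    LinearMap.neg_apply, hy, map_zero] at e1 e2
  have key : (2 : ℂ) • (C (v+1) (D v y)) = 0 := by
    linear_combination (norm := module) e2 - e1
  rcases smul_eq_zero.mp key with h | h
  · exact absurd h two_ne_zero
  · exact h

lemma anchorR {W : Type*} [AddCommGroup W] [Module ℂ W]
    {A B C D : ℂ → Module.End ℂ W} (hQISM : IsQISMI A B C D)
    (v : ℂ) (y : W) (hy : C v y = 0) :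
    A v (D (v+1) y) - C v (B (v+1) y) = A (v+1) (D v y) := by
  have e := LinearMap.congr_fun (hQISM v (v+1)).2.2.2.2.2.2.2.2.2.2.2.2.2.2.2 y
  simp only [Module.End.mul_apply, LinearMap.smul_apply, LinearMap.sub_apply,
    LinearMap.neg_apply, hy, map_zero] at e
  linear_combination (norm := module) e

lemma anchorL {W : Type*} [AddCommGroup W] [Module ℂ W]
    {A B C D : ℂ → Module.End ℂ W} (hQISM : IsQISMI A B C D)
    (v : ℂ) (y : W) (hy : C (v+1) y = 0) :
    A v (D (v+1) y) - C v (B (v+1) y) = D v (A (v+1) y) := by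
  have e13 := LinearMap.congr_fun (hQISM v (v+1)).2.2.2.2.2.2.2.2.2.2.2.2.1 y
  have e15 := LinearMap.congr_fun (hQISM v (v+1)).2.2.2.2.2.2.2.2.2.2.2.2.2.2.1 y
  simp only [Module.End.mul_apply, LinearMap.smul_apply, LinearMap.sub_apply,
    LinearMap.neg_apply, hy, map_zero] at e13 e15
  linear_combination (norm := module) (-1 : ℂ) • e13 - e15

lemma mem_ker_scalar {W : Type*} [AddCommGroup W] [Module ℂ W] (K : Submodule ℂ W)
    (hrank : Module.rank ℂ K = 1) {x v : W} (hx : x ∈ K) (hx0 : x ≠ 0) (hv : v ∈ K) :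
    ∃ α : ℂ, v = α • x := by
  obtain ⟨v₀, hv₀⟩ := rank_le_one_iff.mp hrank.le
  obtain ⟨r, hr⟩ := hv₀ ⟨x, hx⟩
  obtain ⟨s, hs⟩ := hv₀ ⟨v, hv⟩
  have hr0 : r ≠ 0 := by
    rintro rfl
    rw [zero_smul] at hr
    exact hx0 (by simpa using congrArg Subtype.val hr.symm)
  refine ⟨s * r⁻¹, ?_⟩
  have : (⟨v, hv⟩ : K) = (s * r⁻¹) • (⟨x, hx⟩ : K) := by
    rw [← hr, ← hs, smul_smul, mul_assoc, inv_mul_cancel₀ hr0, mul_one]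
  simpa using congrArg Subtype.val this

open Classical in
noncomputable def pickInt (u₀ z : ℂ) : ℤ :=
  if h : ∃ m : ℤ, z = u₀ + m then h.choose else 0

lemma pickInt_eq (u₀ : ℂ) (m : ℤ) : pickInt u₀ (u₀ + m) = m := by
  have h : ∃ k : ℤ, (u₀ + (m:ℂ)) = u₀ + (k:ℂ) := ⟨m, rfl⟩
  rw [pickInt, dif_pos h]
  have h2 : ((h.choose : ℤ) : ℂ) = (m : ℂ) := by linear_combination - h.choose_spec
  exact Int.cast_injective h2

lemma intToE_lt_intToE {m k : ℤ} : intToE m < intToE k ↔ m < k := by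
  rw [intToE, intToE, EReal.coe_lt_coe_iff]
  exact_mod_cast Iff.rfl

lemma intToE_le_intToE {m k : ℤ} : intToE m ≤ intToE k ↔ m ≤ k := by
  rw [intToE, intToE, EReal.coe_le_coe_iff]
  exact_mod_cast Iff.rfl

lemma intToE_inj {m k : ℤ} : intToE m = intToE k ↔ m = k := by
  constructor
  · intro h
    rw [intToE, intToE] at h
    exact_mod_cast EReal.coe_eq_coe_iff.mp h
  · rintro rfl; rfl

lemma intToE_add_one (m : ℤ) : intToE (m + 1) = intToE m + 1 := by
  rw [intToE, intToE, ← EReal.coe_one, ← EReal.coe_add]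
  norm_num

/-- Theorem 1 of the paper: shift-operator action of a QISM I family on a string of
vectors F(u), u ∈ 𝒟 = {u₀ + m : m ∈ ℤ, j₋ < m < j₊}, annihilated by C(u), and the
scalar action and factorization Δ(u) = Δ₊(u)Δ₋(u) of the quantum determinant on
`Span{F(v) : v ∈ 𝒟}`. -/
theorem stmt_0 {W : Type*} [AddCommGroup W] [Module ℂ W]
    (A B C D : ℂ → Module.End ℂ W) (hQISM : IsQISMI A B C D)
    (u₀ : ℂ) (jm jp : EReal)
    (hjm : jm = ⊥ ∨ jm = ⊤ ∨ ∃ k : ℤ, jm = intToE k)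
    (hjp : jp = ⊥ ∨ jp = ⊤ ∨ ∃ k : ℤ, jp = intToE k)
    (hker : ∀ m : ℤ, jm < intToE m → intToE m < jp →
      Module.rank ℂ (LinearMap.ker (C (u₀ + (m : ℂ)))) = 1)
    (hAcond : ∀ m : ℤ, jm < intToE m → intToE m < jp → ∀ w : W, w ≠ 0 →
      C (u₀ + (m : ℂ)) w = 0 →
      ((intToE m ≠ jm + 1 → A (u₀ + (m : ℂ)) w ≠ 0) ∧
       (intToE m = jm + 1 → A (u₀ + (m : ℂ)) w = 0)))
    (hDcond : ∀ m : ℤ, jm < intToE m → intToE m < jp → ∀ w : W, w ≠ 0 →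
      C (u₀ + (m : ℂ)) w = 0 →
      ((intToE m + 1 ≠ jp → D (u₀ + (m : ℂ)) w ≠ 0) ∧
       (intToE m + 1 = jp → D (u₀ + (m : ℂ)) w = 0)))
    (F : ℂ → W)
    (hF : ∀ m : ℤ, jm < intToE m → intToE m < jp →
      F (u₀ + (m : ℂ)) ≠ 0 ∧ C (u₀ + (m : ℂ)) (F (u₀ + (m : ℂ))) = 0) :
    ∃ Δminus Δplus : ℂ → ℂ,
      (∀ m : ℤ, jm < intToE m → intToE m < jp → intToE m ≠ jm + 1 →
        A (u₀ + (m : ℂ)) (F (u₀ + (m : ℂ)))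
          = Δminus (u₀ + (m : ℂ) - 1/2) • F (u₀ + (m : ℂ) - 1)) ∧
      (∀ m : ℤ, jm < intToE m → intToE m < jp → intToE m + 1 ≠ jp →
        D (u₀ + (m : ℂ)) (F (u₀ + (m : ℂ)))
          = Δplus (u₀ + (m : ℂ) + 1/2) • F (u₀ + (m : ℂ) + 1)) ∧
      ∃ c : ℂ → ℂ,
        ∀ n : ℤ,
          ((jm < intToE n ∧ intToE n < jp) ∨ (jm < intToE n + 1 ∧ intToE n + 1 < jp)) →
          (∀ w ∈ Submodule.span ℂ
              {w : W | ∃ k : ℤ, jm < intToE k ∧ intToE k < jp ∧ w = F (u₀ + (k : ℂ))},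
            (qDetI A B C D (u₀ + (n : ℂ) + 1/2)) w = c (u₀ + (n : ℂ) + 1/2) • w) ∧
          ((intToE n + 1 ≠ jp ∧ intToE n ≠ jm) →
            c (u₀ + (n : ℂ) + 1/2)
              = Δplus (u₀ + (n : ℂ) + 1/2) * Δminus (u₀ + (n : ℂ) + 1/2)) ∧
          ((intToE n + 1 = jp ∨ intToE n = jm) → c (u₀ + (n : ℂ) + 1/2) = 0) := by
  classical
  -- cast helpers
  have cast1 : ∀ m : ℤ, u₀ + ((m + 1 : ℤ) : ℂ) = u₀ + (m : ℂ) + 1 := by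
    intro m; push_cast; ring
  have cast2 : ∀ m : ℤ, u₀ + ((m - 1 : ℤ) : ℂ) = u₀ + (m : ℂ) - 1 := by
    intro m; push_cast; ring
  have ptne : ∀ {j k : ℤ}, j ≠ k → (u₀ + (j : ℂ)) ≠ (u₀ + (k : ℂ)) := by
    intro j k hjk h
    exact hjk (Int.cast_injective (by linear_combination h : (j:ℂ) = (k:ℂ)))
  -- EReal helpers
  have hup : ∀ m : ℤ, jm < intToE m → intToE m < jp → intToE m + 1 ≠ jp →
      jm < intToE (m+1) ∧ intToE (m+1) < jp := by
    intro m h1 h2 h3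
    constructor
    · exact h1.trans (intToE_lt_intToE.mpr (by omega))
    · rcases hjp with rfl | rfl | ⟨K, rfl⟩
      · exact absurd h2 (not_lt_bot)
      · exact EReal.coe_lt_top _
      · have hmK : m < K := intToE_lt_intToE.mp h2
        have hne : m + 1 ≠ K := by
          intro h; apply h3; rw [← intToE_add_one, h]
        exact intToE_lt_intToE.mpr (by omega)
  have hdown : ∀ m : ℤ, jm < intToE m → intToE m < jp → intToE m ≠ jm + 1 →
      jm < intToE (m-1) ∧ intToE (m-1) < jp := by
    intro m h1 h2 h3
    refine ⟨?_, (intToE_lt_intToE.mpr (by omega)).trans h2⟩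
    rcases hjm with rfl | rfl | ⟨K, rfl⟩
    · exact EReal.bot_lt_coe _
    · exact absurd h1 not_top_lt
    · have hKm : K < m := intToE_lt_intToE.mp h1
      have hne : m ≠ K + 1 := by
        intro h; apply h3; rw [h, intToE_add_one]
      exact intToE_lt_intToE.mpr (by omega)
  have hne1 : ∀ m : ℤ, jm < intToE m → intToE (m+1) ≠ jm + 1 := by
    intro m h1 he
    rcases hjm with rfl | rfl | ⟨K, rfl⟩
    · rw [EReal.bot_add] at he; exact (EReal.coe_ne_bot _) he
    · exact not_top_lt h1
    · rw [← intToE_add_one] at he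
      have : m = K := by have := intToE_inj.mp he; omega
      subst this
      exact lt_irrefl _ h1
  have hne2 : ∀ m : ℤ, jm < intToE (m+1) → intToE m ≠ jm → intToE (m+1) ≠ jm + 1 := by
    intro m h1 h2 he
    rcases hjm with rfl | rfl | ⟨K, rfl⟩
    · rw [EReal.bot_add] at he; exact (EReal.coe_ne_bot _) he
    · exact not_top_lt h1
    · rw [← intToE_add_one] at he
      have : m = K := by have := intToE_inj.mp he; omega
      exact h2 (by rw [this])
  have hgpred : ∀ m : ℤ, jm < intToE (m+1) → intToE m ≠ jm → jm < intToE m := by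
    intro m h1 h2
    rcases hjm with rfl | rfl | ⟨K, rfl⟩
    · exact EReal.bot_lt_coe _
    · exact absurd h1 not_top_lt
    · have hK : K < m + 1 := intToE_lt_intToE.mp h1
      have hmK : m ≠ K := fun h => h2 (by rw [h])
      exact intToE_lt_intToE.mpr (by omega)
  -- existence of shift coefficients
  have hAex : ∀ m : ℤ, jm < intToE m → intToE m < jp → intToE m ≠ jm + 1 →
      ∃ α : ℂ, α ≠ 0 ∧ A (u₀ + (m:ℂ)) (F (u₀ + (m:ℂ))) = α • F (u₀ + (m:ℂ) - 1) := by
    intro m h1 h2 h3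
    obtain ⟨hF0, hFC⟩ := hF m h1 h2
    obtain ⟨hg1, hg2⟩ := hdown m h1 h2 h3
    obtain ⟨hF0', hFC'⟩ := hF (m-1) hg1 hg2
    have hmem : A (u₀ + (m:ℂ)) (F (u₀ + (m:ℂ))) ∈ LinearMap.ker (C (u₀ + ((m-1:ℤ):ℂ))) := by
      rw [LinearMap.mem_ker, cast2 m]
      exact shiftA hQISM (u₀ + (m:ℂ)) _ hFC
    obtain ⟨α, hα⟩ := mem_ker_scalar _ (hker (m-1) hg1 hg2) (LinearMap.mem_ker.mpr hFC') hF0' hmem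
    rw [cast2 m] at hα
    refine ⟨α, ?_, hα⟩
    intro h0; rw [h0, zero_smul] at hα
    exact (hAcond m h1 h2 _ hF0 hFC).1 h3 hα
  have hDex : ∀ m : ℤ, jm < intToE m → intToE m < jp → intToE m + 1 ≠ jp →
      ∃ β : ℂ, β ≠ 0 ∧ D (u₀ + (m:ℂ)) (F (u₀ + (m:ℂ))) = β • F (u₀ + (m:ℂ) + 1) := by
    intro m h1 h2 h3
    obtain ⟨hF0, hFC⟩ := hF m h1 h2
    obtain ⟨hg1, hg2⟩ := hup m h1 h2 h3
    obtain ⟨hF0', hFC'⟩ := hF (m+1) hg1 hg2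
    have hmem : D (u₀ + (m:ℂ)) (F (u₀ + (m:ℂ))) ∈ LinearMap.ker (C (u₀ + ((m+1:ℤ):ℂ))) := by
      rw [LinearMap.mem_ker, cast1 m]
      exact shiftD hQISM (u₀ + (m:ℂ)) _ hFC
    obtain ⟨β, hβ⟩ := mem_ker_scalar _ (hker (m+1) hg1 hg2) (LinearMap.mem_ker.mpr hFC') hF0' hmem
    rw [cast1 m] at hβ
    refine ⟨β, ?_, hβ⟩
    intro h0; rw [h0, zero_smul] at hβ
    exact (hDcond m h1 h2 _ hF0 hFC).1 h3 hβ
  obtain ⟨gA, hgA⟩ : ∃ g : ℤ → ℂ, ∀ m : ℤ, jm < intToE m → intToE m < jp → intToE m ≠ jm + 1 →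
      g m ≠ 0 ∧ A (u₀ + (m:ℂ)) (F (u₀ + (m:ℂ))) = g m • F (u₀ + (m:ℂ) - 1) := by
    refine ⟨fun m => if h : jm < intToE m ∧ intToE m < jp ∧ intToE m ≠ jm + 1 then
      (hAex m h.1 h.2.1 h.2.2).choose else 0, fun m h1 h2 h3 => ?_⟩
    dsimp only
    rw [dif_pos ⟨h1, h2, h3⟩]
    exact (hAex m h1 h2 h3).choose_spec
  obtain ⟨gD, hgD⟩ : ∃ g : ℤ → ℂ, ∀ m : ℤ, jm < intToE m → intToE m < jp → intToE m + 1 ≠ jp →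
      g m ≠ 0 ∧ D (u₀ + (m:ℂ)) (F (u₀ + (m:ℂ))) = g m • F (u₀ + (m:ℂ) + 1) := by
    refine ⟨fun m => if h : jm < intToE m ∧ intToE m < jp ∧ intToE m + 1 ≠ jp then
      (hDex m h.1 h.2.1 h.2.2).choose else 0, fun m h1 h2 h3 => ?_⟩
    dsimp only
    rw [dif_pos ⟨h1, h2, h3⟩]
    exact (hDex m h1 h2 h3).choose_spec
  refine ⟨fun z => gA (pickInt u₀ (z + 1/2)), fun z => gD (pickInt u₀ (z - 1/2)), ?_, ?_, ?_⟩
  · -- part 1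
    intro m h1 h2 h3
    have hp : pickInt u₀ (u₀ + (m:ℂ) - 1/2 + 1/2) = m := by
      rw [show u₀ + (m:ℂ) - 1/2 + 1/2 = u₀ + (m:ℂ) by ring, pickInt_eq]
    simp only [hp]
    exact (hgA m h1 h2 h3).2
  · -- part 2
    intro m h1 h2 h3
    have hp : pickInt u₀ (u₀ + (m:ℂ) + 1/2 - 1/2) = m := by
      rw [show u₀ + (m:ℂ) + 1/2 - 1/2 = u₀ + (m:ℂ) by ring, pickInt_eq]
    simp only [hp]
    exact (hgD m h1 h2 h3).2
  · -- part 3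
    refine ⟨fun z => if (intToE (pickInt u₀ (z - 1/2)) + 1 = jp ∨ intToE (pickInt u₀ (z - 1/2)) = jm)
      then 0 else gD (pickInt u₀ (z - 1/2)) * gA (pickInt u₀ (z + 1/2)), fun n hn => ?_⟩
    have hpickn : pickInt u₀ (u₀ + (n:ℂ) + 1/2 - 1/2) = n := by
      rw [show u₀ + (n:ℂ) + 1/2 - 1/2 = u₀ + (n:ℂ) by ring, pickInt_eq]
    have hpickn1 : pickInt u₀ (u₀ + (n:ℂ) + 1/2 + 1/2) = n + 1 := by
      rw [show u₀ + (n:ℂ) + 1/2 + 1/2 = u₀ + ((n+1:ℤ):ℂ) by push_cast; ring, pickInt_eq]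
    simp only [hpickn, hpickn1]
    set cv : ℂ := if (intToE n + 1 = jp ∨ intToE n = jm) then 0 else gD n * gA (n + 1) with hcv
    refine ⟨?_, ?_, ?_⟩
    · -- scalar action on the span
      -- expand the quantum determinant
      have hqdet : qDetI A B C D (u₀ + (n:ℂ) + 1/2)
          = A (u₀ + (n:ℂ)) * D (u₀ + (n:ℂ) + 1) - C (u₀ + (n:ℂ)) * B (u₀ + (n:ℂ) + 1) := by
        rw [qDetI, show u₀ + (n:ℂ) + 1/2 - 1/2 = u₀ + (n:ℂ) by ring,
          show u₀ + (n:ℂ) + 1/2 + 1/2 = u₀ + (n:ℂ) + 1 by ring]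
      -- kernel produces eigen-scalar
      have hkerQ : ∀ k : ℤ, jm < intToE k → intToE k < jp → k ≠ n →
          ∃ γ : ℂ, A (u₀ + (n:ℂ)) (D (u₀ + (n:ℂ) + 1) (F (u₀ + (k:ℂ))))
            - C (u₀ + (n:ℂ)) (B (u₀ + (n:ℂ) + 1) (F (u₀ + (k:ℂ)))) = γ • F (u₀ + (k:ℂ)) := by
        intro k h1 h2 hkn
        obtain ⟨hF0k, hCFk⟩ := hF k h1 h2
        have hne : (u₀ + (n:ℂ)) ≠ (u₀ + (k:ℂ)) := ptne (Ne.symm hkn)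
        have hkey := keyC hQISM (u₀ + (n:ℂ)) (u₀ + (k:ℂ)) hne (F (u₀ + (k:ℂ)))
        rw [hCFk] at hkey
        simp only [map_zero, sub_zero] at hkey
        have hmem : A (u₀ + (n:ℂ)) (D (u₀ + (n:ℂ) + 1) (F (u₀ + (k:ℂ))))
            - C (u₀ + (n:ℂ)) (B (u₀ + (n:ℂ) + 1) (F (u₀ + (k:ℂ))))
            ∈ LinearMap.ker (C (u₀ + (k:ℂ))) := by
          rw [LinearMap.mem_ker, map_sub]
          exact hkey
        exact mem_ker_scalar _ (hker k h1 h2) (LinearMap.mem_ker.mpr hCFk) hF0k hmem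
      -- step lemmas
      have hstep_up : ∀ j : ℤ, jm < intToE j → intToE j < jp → jm < intToE (j+1) → intToE (j+1) < jp →
          j ≠ n → j + 1 ≠ n →
          (A (u₀ + (n:ℂ)) (D (u₀ + (n:ℂ) + 1) (F (u₀ + (j:ℂ))))
            - C (u₀ + (n:ℂ)) (B (u₀ + (n:ℂ) + 1) (F (u₀ + (j:ℂ)))) = cv • F (u₀ + (j:ℂ))) →
          (A (u₀ + (n:ℂ)) (D (u₀ + (n:ℂ) + 1) (F (u₀ + ((j+1:ℤ):ℂ))))
            - C (u₀ + (n:ℂ)) (B (u₀ + (n:ℂ) + 1) (F (u₀ + ((j+1:ℤ):ℂ)))) = cv • F (u₀ + ((j+1:ℤ):ℂ))) := by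
        intro j h1 h2 h3 h4 hjn hj1n hQj
        obtain ⟨hgD0, hDF⟩ := hgD j h1 h2 (by rw [← intToE_add_one]; exact h4.ne)
        obtain ⟨γ, hγ⟩ := hkerQ (j+1) h3 h4 hj1n
        rw [cast1 j] at hγ
        have hFne : F (u₀ + (j:ℂ) + 1) ≠ 0 := by
          have := (hF (j+1) h3 h4).1; rwa [cast1 j] at this
        have hkey := keyD hQISM (u₀ + (n:ℂ)) (u₀ + (j:ℂ)) (ptne (Ne.symm hjn)) (F (u₀ + (j:ℂ)))
        rw [hDF] at hkey
        simp only [map_smul] at hkey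
        rw [← map_sub, hQj, map_smul, hDF, ← smul_sub, hγ] at hkey
        have h0 : (cv * gD j - gD j * γ) • F (u₀ + (j:ℂ) + 1) = 0 := by
          rw [sub_smul, ← smul_smul, ← smul_smul, hkey, sub_self]
        have hγcv : γ = cv := by
          rcases smul_eq_zero.mp h0 with h | h
          · exact mul_left_cancel₀ hgD0 (by linear_combination -h)
          · exact absurd h hFne
        rw [cast1 j, hγ, hγcv]
      have hstep_down : ∀ j : ℤ, jm < intToE (j-1) → intToE (j-1) < jp → jm < intToE j → intToE j < jp →
          j - 1 ≠ n →
          (A (u₀ + (n:ℂ)) (D (u₀ + (n:ℂ) + 1) (F (u₀ + (j:ℂ))))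
            - C (u₀ + (n:ℂ)) (B (u₀ + (n:ℂ) + 1) (F (u₀ + (j:ℂ)))) = cv • F (u₀ + (j:ℂ))) →
          (A (u₀ + (n:ℂ)) (D (u₀ + (n:ℂ) + 1) (F (u₀ + ((j-1:ℤ):ℂ))))
            - C (u₀ + (n:ℂ)) (B (u₀ + (n:ℂ) + 1) (F (u₀ + ((j-1:ℤ):ℂ)))) = cv • F (u₀ + ((j-1:ℤ):ℂ))) := by
        intro j h1 h2 h3 h4 hjn hQj
        obtain ⟨hgD0, hDF⟩ := hgD (j-1) h1 h2
          (by rw [← intToE_add_one, show j-1+1 = j from by omega]; exact h4.ne)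
        have ec : u₀ + ((j-1:ℤ):ℂ) + 1 = u₀ + (j:ℂ) := by push_cast; ring
        rw [ec] at hDF
        obtain ⟨γ, hγ⟩ := hkerQ (j-1) h1 h2 hjn
        have hFne : F (u₀ + (j:ℂ)) ≠ 0 := (hF j h3 h4).1
        have hkey := keyD hQISM (u₀ + (n:ℂ)) (u₀ + ((j-1:ℤ):ℂ)) (ptne (Ne.symm hjn)) (F (u₀ + ((j-1:ℤ):ℂ)))
        rw [hDF] at hkey
        simp only [map_smul] at hkey
        rw [← map_sub, hγ, map_smul, hDF, ← smul_sub, hQj] at hkey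
        have h0 : (γ * gD (j-1) - gD (j-1) * cv) • F (u₀ + (j:ℂ)) = 0 := by
          rw [sub_smul, ← smul_smul, ← smul_smul, hkey, sub_self]
        have hγcv : γ = cv := by
          rcases smul_eq_zero.mp h0 with h | h
          · exact mul_left_cancel₀ hgD0 (by linear_combination h)
          · exact absurd h hFne
        rw [hγ, hγcv]
      -- anchors
      have hanchor_n : jm < intToE n → intToE n < jp →
          A (u₀ + (n:ℂ)) (D (u₀ + (n:ℂ) + 1) (F (u₀ + (n:ℂ))))
            - C (u₀ + (n:ℂ)) (B (u₀ + (n:ℂ) + 1) (F (u₀ + (n:ℂ)))) = cv • F (u₀ + (n:ℂ)) := by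
        intro h1 h2
        obtain ⟨hF0, hCF⟩ := hF n h1 h2
        have hAnch := anchorR hQISM (u₀ + (n:ℂ)) (F (u₀ + (n:ℂ))) hCF
        rw [hAnch]
        by_cases hedge : intToE n + 1 = jp
        · rw [(hDcond n h1 h2 _ hF0 hCF).2 hedge, map_zero, hcv, if_pos (Or.inl hedge), zero_smul]
        · obtain ⟨hgD0, hDF⟩ := hgD n h1 h2 hedge
          obtain ⟨hg1, hg2⟩ := hup n h1 h2 hedge
          have hA1 := (hgA (n+1) hg1 hg2 (hne1 n h1)).2
          rw [cast1 n, show u₀ + (n:ℂ) + 1 - 1 = u₀ + (n:ℂ) by ring] at hA1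
          rw [hDF, map_smul, hA1, smul_smul, hcv, if_neg (not_or_intro hedge h1.ne')]
      have hanchor_n1 : jm < intToE (n+1) → intToE (n+1) < jp →
          A (u₀ + (n:ℂ)) (D (u₀ + (n:ℂ) + 1) (F (u₀ + ((n+1:ℤ):ℂ))))
            - C (u₀ + (n:ℂ)) (B (u₀ + (n:ℂ) + 1) (F (u₀ + ((n+1:ℤ):ℂ)))) = cv • F (u₀ + ((n+1:ℤ):ℂ)) := by
        intro h1 h2
        obtain ⟨hF0', hCF'⟩ := hF (n+1) h1 h2
        have hF0 := hF0'
        have hCF := hCF'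
        rw [cast1 n] at hF0 hCF ⊢
        have hAnch := anchorL hQISM (u₀ + (n:ℂ)) (F (u₀ + (n:ℂ) + 1)) hCF
        rw [hAnch]
        by_cases hedge : intToE n = jm
        · have hA0 := (hAcond (n+1) h1 h2 _ hF0' hCF').2 (by rw [intToE_add_one, hedge])
          rw [cast1 n] at hA0
          rw [hA0, map_zero, hcv, if_pos (Or.inr hedge), zero_smul]
        · have hA1 := (hgA (n+1) h1 h2 (hne2 n h1 hedge)).2
          rw [cast1 n, show u₀ + (n:ℂ) + 1 - 1 = u₀ + (n:ℂ) by ring] at hA1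
          have hgn1 : jm < intToE n := hgpred n h1 hedge
          have hgn2 : intToE n < jp := (intToE_lt_intToE.mpr (by omega)).trans h2
          have hnejp : intToE n + 1 ≠ jp := by rw [← intToE_add_one]; exact h2.ne
          obtain ⟨hgD0, hDF⟩ := hgD n hgn1 hgn2 hnejp
          rw [hA1, map_smul, hDF, smul_smul, hcv, if_neg (not_or_intro hnejp hedge),
            mul_comm (gA (n+1)) (gD n)]
      -- chains
      have hupall : jm < intToE (n+1) → ∀ k : ℤ, n + 1 ≤ k → jm < intToE k → intToE k < jp →
          A (u₀ + (n:ℂ)) (D (u₀ + (n:ℂ) + 1) (F (u₀ + (k:ℂ))))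
            - C (u₀ + (n:ℂ)) (B (u₀ + (n:ℂ) + 1) (F (u₀ + (k:ℂ)))) = cv • F (u₀ + (k:ℂ)) := by
        intro hlow0 k hk
        refine Int.le_induction (motive := fun k _ => jm < intToE k → intToE k < jp →
          A (u₀ + (n:ℂ)) (D (u₀ + (n:ℂ) + 1) (F (u₀ + (k:ℂ))))
            - C (u₀ + (n:ℂ)) (B (u₀ + (n:ℂ) + 1) (F (u₀ + (k:ℂ)))) = cv • F (u₀ + (k:ℂ)))
          ?_ ?_ k hk
        · exact fun h1 h2 => hanchor_n1 h1 h2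
        · intro j hj ih h1 h2
          have hgj1 : jm < intToE j := by
            rcases eq_or_lt_of_le hj with rfl | hlt
            · exact hlow0
            · exact hlow0.trans (intToE_lt_intToE.mpr (by omega))
          have hgj2 : intToE j < jp := (intToE_lt_intToE.mpr (by omega)).trans h2
          exact hstep_up j hgj1 hgj2 h1 h2 (by omega) (by omega) (ih hgj1 hgj2)
      have hdownall : jm < intToE n → intToE n < jp → ∀ k : ℤ, k ≤ n → jm < intToE k → intToE k < jp →
          A (u₀ + (n:ℂ)) (D (u₀ + (n:ℂ) + 1) (F (u₀ + (k:ℂ))))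
            - C (u₀ + (n:ℂ)) (B (u₀ + (n:ℂ) + 1) (F (u₀ + (k:ℂ)))) = cv • F (u₀ + (k:ℂ)) := by
        intro hgn1 hgn2 k hk
        refine Int.le_induction_down (motive := fun k _ => jm < intToE k → intToE k < jp →
          A (u₀ + (n:ℂ)) (D (u₀ + (n:ℂ) + 1) (F (u₀ + (k:ℂ))))
            - C (u₀ + (n:ℂ)) (B (u₀ + (n:ℂ) + 1) (F (u₀ + (k:ℂ)))) = cv • F (u₀ + (k:ℂ)))
          ?_ ?_ k hk
        · exact fun h1 h2 => hanchor_n h1 h2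
        · intro j hj ih h1 h2
          have hgj1 : jm < intToE j := h1.trans (intToE_lt_intToE.mpr (by omega))
          have hgj2 : intToE j < jp := lt_of_le_of_lt (intToE_le_intToE.mpr hj) hgn2
          exact hstep_down j h1 h2 hgj1 hgj2 (by omega) (ih hgj1 hgj2)
      have hQmain : ∀ k : ℤ, jm < intToE k → intToE k < jp →
          A (u₀ + (n:ℂ)) (D (u₀ + (n:ℂ) + 1) (F (u₀ + (k:ℂ))))
            - C (u₀ + (n:ℂ)) (B (u₀ + (n:ℂ) + 1) (F (u₀ + (k:ℂ)))) = cv • F (u₀ + (k:ℂ)) := by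
        intro k h1 h2
        by_cases hgn : jm < intToE n ∧ intToE n < jp
        · rcases le_or_gt k n with hk | hk
          · exact hdownall hgn.1 hgn.2 k hk h1 h2
          · have hlow : jm < intToE (n+1) := hgn.1.trans (intToE_lt_intToE.mpr (by omega))
            exact hupall hlow k (by omega) h1 h2
        · have hgood1 : jm < intToE (n+1) ∧ intToE (n+1) < jp := by
            rcases hn with h | h
            · exact absurd h hgn
            · rwa [← intToE_add_one] at h
          have hk : n + 1 ≤ k := by
            by_contra hc
            push_neg at hc
            apply hgn
            constructor
            · exact lt_of_lt_of_le h1 (intToE_le_intToE.mpr (by omega))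
            · exact (intToE_lt_intToE.mpr (by omega)).trans hgood1.2
          exact hupall hgood1.1 k hk h1 h2
      intro w hw
      induction hw using Submodule.span_induction with
      | mem x hx =>
        obtain ⟨k, hk1, hk2, rfl⟩ := hx
        have hk := hQmain k hk1 hk2
        rw [hqdet]
        simpa only [LinearMap.sub_apply, Module.End.mul_apply] using hk
      | zero => simp
      | add x y _ _ hx hy => rw [map_add, hx, hy, smul_add]
      | smul t x _ hx => rw [map_smul, hx, smul_comm]

    · -- non-edge value
      rintro ⟨hp1, hp2⟩
      rw [hcv, if_neg (not_or_intro hp1 hp2)]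
    · -- edge value
      intro h
      rw [hcv, if_pos h]
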